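/- Let M be a module over a commutative ring R and let 𝔑 be the set of endomorphisms of M whose kernel is an essential submodule of M. If M is Noetherian, then 𝔑 is a two-sided ideal of End_R(M) consisting of nilpotent endomorphisms. (Key steps: the kernel of a sum or composite with elements of 𝔑 is again essential; and if ker(aⁿ) = ker(aⁿ⁺¹) and ker(aⁿ) is essential, then aⁿ = 0... in fact Im(aⁿ) = 0, so a is nilpotent.) -/

import Mathlib

/-- For a Noetherian module `M` over a commutative ring, the set of endomorphisms of `M`
whose kernel is an essential submodule (meets every nonzero submodule nontrivially) forms a
two-sided ideal of `End_R(M)` consisting of nilpotent endomorphisms. -/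
theorem essential_ker_twoSidedIdeal_nilpotent {R M : Type*} [CommRing R] [AddCommGroup M]
    [Module R M] [IsNoetherian R M] :
    ∃ I : TwoSidedIdeal (Module.End R M),
      (∀ a : Module.End R M,
        a ∈ I ↔ ∀ H : Submodule R M, H ≠ ⊥ → LinearMap.ker a ⊓ H ≠ ⊥) ∧
      ∀ a ∈ I, IsNilpotent a := by
  classical
  set S : Set (Module.End R M) :=
    {a | ∀ H : Submodule R M, H ≠ ⊥ → LinearMap.ker a ⊓ H ≠ ⊥} with hS
  have ne_bot_mono : ∀ {N P : Submodule R M}, N ≤ P → N ≠ ⊥ → P ≠ ⊥ := by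
    intro N P hle hne h
    exact hne (le_bot_iff.mp (h ▸ hle))
  have zero_mem : (0 : Module.End R M) ∈ S := by
    intro H hH
    simpa [LinearMap.ker_zero] using hH
  have add_mem : ∀ {x y : Module.End R M}, x ∈ S → y ∈ S → x + y ∈ S := by
    intro x y hx hy H hH
    have h1 : LinearMap.ker x ⊓ H ≠ ⊥ := hx H hH
    have h2 : LinearMap.ker y ⊓ (LinearMap.ker x ⊓ H) ≠ ⊥ := hy _ h1
    refine ne_bot_mono ?_ h2
    intro z hz
    simp only [Submodule.mem_inf, LinearMap.mem_ker] at hz ⊢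
    exact ⟨by simp [hz.1, hz.2.1], hz.2.2⟩
  have neg_mem : ∀ {x : Module.End R M}, x ∈ S → -x ∈ S := by
    intro x hx H hH
    have : LinearMap.ker (-x) = LinearMap.ker x := by
      ext z; simp [LinearMap.mem_ker, neg_eq_zero]
    rw [this]; exact hx H hH
  have mul_mem_left : ∀ {x y : Module.End R M}, y ∈ S → x * y ∈ S := by
    intro x y hy H hH
    refine ne_bot_mono ?_ (hy H hH)
    intro z hz
    simp only [Submodule.mem_inf, LinearMap.mem_ker] at hz ⊢
    exact ⟨by simp [Module.End.mul_apply, hz.1], hz.2⟩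
  have mul_mem_right : ∀ {x y : Module.End R M}, x ∈ S → x * y ∈ S := by
    intro x y hx H hH
    by_cases hmap : Submodule.map y H = ⊥
    · refine ne_bot_mono ?_ hH
      rw [le_inf_iff]
      refine ⟨?_, le_rfl⟩
      intro z hz
      have : y z = 0 := by
        have : y z ∈ Submodule.map y H := ⟨z, hz, rfl⟩
        rw [hmap] at this; simpa using this
      simp [LinearMap.mem_ker, Module.End.mul_apply, this]
    · have h1 : LinearMap.ker x ⊓ Submodule.map y H ≠ ⊥ := hx _ hmap
      rw [Submodule.ne_bot_iff] at h1 ⊢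
      obtain ⟨w, hw, hw0⟩ := h1
      rw [Submodule.mem_inf] at hw
      obtain ⟨h, hhH, rfl⟩ := hw.2
      refine ⟨h, Submodule.mem_inf.mpr ⟨?_, hhH⟩, ?_⟩
      · simpa [LinearMap.mem_ker, Module.End.mul_apply] using hw.1
      · rintro rfl; exact hw0 (map_zero y)
  refine ⟨TwoSidedIdeal.mk' S zero_mem add_mem neg_mem mul_mem_left mul_mem_right,
    fun a => TwoSidedIdeal.mem_mk' S zero_mem add_mem neg_mem mul_mem_left mul_mem_right a,
    ?_⟩
  intro a haI
  have ha : a ∈ S :=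
    (TwoSidedIdeal.mem_mk' S zero_mem add_mem neg_mem mul_mem_left mul_mem_right a).mp haI
  obtain ⟨n, hn⟩ := monotone_stabilizes_iff_noetherian.mpr inferInstance
    (LinearMap.iterateKer (a : M →ₗ[R] M))
  set N := n + 1 with hN
  have hstab : LinearMap.ker (a ^ (N + N)) = LinearMap.ker (a ^ N) := by
    have h1 := hn (N + N) (by omega)
    have h2 := hn N (by omega)
    exact h1.symm.trans h2
  refine ⟨N, ?_⟩
  rw [← LinearMap.range_eq_bot]
  by_contra hrange
  have h1 : LinearMap.ker a ⊓ LinearMap.range (a ^ N) ≠ ⊥ := ha _ hrange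
  rw [Submodule.ne_bot_iff] at h1
  obtain ⟨x, hx, hx0⟩ := h1
  rw [Submodule.mem_inf] at hx
  obtain ⟨y, rfl⟩ := hx.2
  have hy : y ∈ LinearMap.ker (a ^ (N + N)) := by
    rw [LinearMap.mem_ker, pow_add, Module.End.mul_apply]
    have hker : (a ^ N) y ∈ LinearMap.ker a := hx.1
    have : (a ^ N) y ∈ LinearMap.ker (a ^ N) := by
      have hle : LinearMap.ker a ≤ LinearMap.ker (a ^ N) := by
        intro z hz
        rw [LinearMap.mem_ker] at hz ⊢
        rw [hN, pow_succ, Module.End.mul_apply, hz, map_zero]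
      exact hle hker
    exact LinearMap.mem_ker.mp this
  rw [hstab, LinearMap.mem_ker] at hy
  exact hx0 hy
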